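/- (Gibbs–Thomson relation as a solvability condition) Under the assumptions of the Fredholm solvability fact, let T₀ ∈ L²_loc(ℝ) be such that z ↦ T₀(z)ν'(φ₀(z))φ₀'(z) is integrable (ν ∈ C¹_b(ℝ)), and suppose u ∈ H²(ℝ) solves u'' - W''(φ₀)u = (ᾱv - H)·φ₀' - γ̄·ν'(φ₀)·T₀ for real constants ᾱ, v, H, γ̄. Then σ₀·(ᾱv - H) = γ̄·∫_ℝ T₀(z)·(ν∘φ₀)'(z) dz, where σ₀ := ∫_ℝ (φ₀'(z))² dz. -/

import Mathlib

open MeasureTheory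

noncomputable section

open Filter

section Helpers

private lemma mulL2 {f g : ℝ → ℝ} (hf : MemLp f 2 (volume : Measure ℝ))
    (hg : MemLp g 2 (volume : Measure ℝ)) :
    Integrable (fun x => f x * g x) (volume : Measure ℝ) := by
  have : MemLp (f • g) 1 (volume : Measure ℝ) :=
    hg.smul hf
  exact memLp_one_iff_integrable.mp this

private lemma limc_zero {h : ℝ → ℝ} (hi : Integrable h (volume : Measure ℝ)) {c : ℝ}
    (hl : Tendsto h atTop (nhds c)) : c = 0 := by
  by_contra hc
  have hcp : 0 < |c| / 2 := by positivity
  have hev : ∀ᶠ x in atTop, |c| / 2 ≤ |h x| := by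
    filter_upwards [hl.eventually (eventually_abs_sub_lt c hcp)] with x hx
    rw [abs_sub_comm] at hx
    have h2 : |c| - |h x| ≤ |c - h x| := abs_sub_abs_le_abs_sub c (h x)
    linarith
  obtain ⟨A, hA⟩ := hev.exists_forall_of_atTop
  have hfin := hi.restrict (s := Set.Ici A)
  have hlb : ENNReal.ofReal (|c|/2) * (volume : Measure ℝ) (Set.Ici A) ≤
      ∫⁻ x in Set.Ici A, ‖h x‖₊ ∂(volume : Measure ℝ) := by
    rw [← MeasureTheory.setLIntegral_const]
    refine setLIntegral_mono' measurableSet_Ici fun x hx => ?_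
    have := hA x hx
    simp only [← Real.norm_eq_abs] at this
    exact (ENNReal.ofReal_le_ofReal (by simpa using this)).trans (by
      simp [Real.enorm_eq_ofReal_abs, Real.norm_eq_abs])
  rw [Real.volume_Ici] at hlb
  have hne : ENNReal.ofReal (|c|/2) ≠ 0 := by
    simp [ENNReal.ofReal_eq_zero, not_le, hcp]
  rw [ENNReal.mul_top hne] at hlb
  exact absurd (lt_of_le_of_lt hlb hfin.2) (by simp)

private lemma limc_zero_bot {h : ℝ → ℝ} (hi : Integrable h (volume : Measure ℝ)) {c : ℝ}
    (hl : Tendsto h atBot (nhds c)) : c = 0 := by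
  have hi' : Integrable (fun x => h (-x)) (volume : Measure ℝ) := hi.comp_neg
  exact limc_zero hi' (hl.comp tendsto_neg_atTop_atBot)

private lemma decay {f : ℝ → ℝ} (hf : Differentiable ℝ f)
    (h2 : MemLp f 2 (volume : Measure ℝ)) (h2' : MemLp (deriv f) 2 (volume : Measure ℝ)) :
    Tendsto f atTop (nhds 0) ∧ Tendsto f atBot (nhds 0) := by
  set h : ℝ → ℝ := fun x => 2 * (f x * deriv f x) with hh
  have hint : Integrable h (volume : Measure ℝ) := (mulL2 h2 h2').const_mul 2
  have hder : ∀ x, HasDerivAt (fun y => f y ^ 2) (h x) x := by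
    intro x
    have := ((hf x).hasDerivAt.mul (hf x).hasDerivAt)
    have h2 : HasDerivAt (fun y => f y * f y) (2 * (f x * deriv f x)) x := by
      exact this.congr_deriv (by ring)
    simpa [pow_two] using h2
  have hftc : ∀ x : ℝ, f x ^ 2 - f 0 ^ 2 = ∫ t in (0:ℝ)..x, h t := by
    intro x
    rw [intervalIntegral.integral_eq_sub_of_hasDerivAt (fun t _ => hder t)
      hint.intervalIntegrable]
  have htopI : Tendsto (fun x : ℝ => ∫ t in (0:ℝ)..x, h t) atTop
      (nhds (∫ t in Set.Ioi (0:ℝ), h t)) :=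
    intervalIntegral_tendsto_integral_Ioi 0 (hint.integrableOn) tendsto_id
  have hsqTop : Tendsto (fun x => f x ^ 2) atTop
      (nhds (f 0 ^ 2 + ∫ t in Set.Ioi (0:ℝ), h t)) := by
    have : Tendsto (fun x => f 0 ^ 2 + ∫ t in (0:ℝ)..x, h t) atTop
        (nhds (f 0 ^ 2 + ∫ t in Set.Ioi (0:ℝ), h t)) := tendsto_const_nhds.add htopI
    refine this.congr fun x => by linarith [hftc x]
  have hbotI : Tendsto (fun x : ℝ => ∫ t in x..(0:ℝ), h t) atBot
      (nhds (∫ t in Set.Iic (0:ℝ), h t)) :=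
    intervalIntegral_tendsto_integral_Iic 0 (hint.integrableOn) tendsto_id
  have hsqBot : Tendsto (fun x => f x ^ 2) atBot
      (nhds (f 0 ^ 2 - ∫ t in Set.Iic (0:ℝ), h t)) := by
    have : Tendsto (fun x => f 0 ^ 2 - ∫ t in x..(0:ℝ), h t) atBot
        (nhds (f 0 ^ 2 - ∫ t in Set.Iic (0:ℝ), h t)) := tendsto_const_nhds.sub hbotI
    refine this.congr fun x => ?_
    have := hftc x
    rw [intervalIntegral.integral_symm] at this
    linarith
  have hsqInt : Integrable (fun x => f x ^ 2) (volume : Measure ℝ) := by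
    have := mulL2 h2 h2; simpa [pow_two] using this
  have c1 := limc_zero hsqInt hsqTop
  have c2 := limc_zero_bot hsqInt hsqBot
  rw [c1] at hsqTop; rw [c2] at hsqBot
  constructor
  · rw [tendsto_zero_iff_norm_tendsto_zero]
    have : Tendsto (fun x => Real.sqrt (f x ^ 2)) atTop (nhds (Real.sqrt 0)) :=
      (Real.continuous_sqrt.tendsto 0).comp hsqTop
    simpa [Real.sqrt_sq_eq_abs, Real.norm_eq_abs] using this
  · rw [tendsto_zero_iff_norm_tendsto_zero]
    have : Tendsto (fun x => Real.sqrt (f x ^ 2)) atBot (nhds (Real.sqrt 0)) :=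
      (Real.continuous_sqrt.tendsto 0).comp hsqBot
    simpa [Real.sqrt_sq_eq_abs, Real.norm_eq_abs] using this

private lemma int_deriv_zero {g g' : ℝ → ℝ} (hg : ∀ x, HasDerivAt g (g' x) x)
    (hi : Integrable g' (volume : Measure ℝ)) (ht : Tendsto g atTop (nhds 0))
    (hb : Tendsto g atBot (nhds 0)) : ∫ x, g' x = 0 := by
  have hR : ∀ R : ℝ, ∫ x in (-R)..R, g' x = g R - g (-R) := fun R =>
    intervalIntegral.integral_eq_sub_of_hasDerivAt (fun t _ => hg t)
      hi.intervalIntegrable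
  have h1 : Tendsto (fun R : ℝ => ∫ x in (-R)..R, g' x) atTop (nhds (∫ x, g' x)) :=
    intervalIntegral_tendsto_integral hi tendsto_neg_atTop_atBot tendsto_id
  have h2 : Tendsto (fun R : ℝ => g R - g (-R)) atTop (nhds (0 - 0)) :=
    ht.sub (hb.comp tendsto_neg_atTop_atBot)
  rw [sub_zero] at h2
  exact tendsto_nhds_unique (h1.congr fun R => (hR R)) h2

end Helpers


/-- `f ∈ H²(ℝ)` (for twice differentiable representatives):
`f`, `f'`, `f''` all belong to `L²(ℝ)`. -/
def memH2line (f : ℝ → ℝ) : Prop :=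
  MemLp f 2 (volume : Measure ℝ) ∧ MemLp (deriv f) 2 (volume : Measure ℝ) ∧
    MemLp (deriv (deriv f)) 2 (volume : Measure ℝ)

/-- Gibbs–Thomson relation as a solvability condition: if
`u'' - W''(φ₀)u = (ᾱv - H)φ₀' - γ̄ ν'(φ₀) T₀` is solvable with `u ∈ H²(ℝ)`, then
`σ₀ (ᾱv - H) = γ̄ ∫ T₀ (ν∘φ₀)'`, where `σ₀ = ∫ (φ₀')²`. -/
theorem statement10 (W ν : ℝ → ℝ) (hW : ContDiff ℝ 2 W)
    (hWb : ∃ M : ℝ, ∀ x, |W x| + |deriv W x| + |deriv (deriv W) x| ≤ M)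
    (hν : ContDiff ℝ 1 ν) (hνb : ∃ M : ℝ, ∀ x, |ν x| + |deriv ν x| ≤ M)
    (φ₀ : ℝ → ℝ) (hφ : ContDiff ℝ 2 φ₀) (hφ' : memH2line (deriv φ₀))
    (hφne : deriv φ₀ ≠ 0)
    (heq : ∀ z : ℝ, deriv (deriv φ₀) z = deriv W (φ₀ z))
    (T₀ : ℝ → ℝ) (hT₀meas : Measurable T₀)
    (hT₀loc : LocallyIntegrable (fun z => (T₀ z) ^ 2) (volume : Measure ℝ))
    (hT₀int : Integrable (fun z => T₀ z * deriv ν (φ₀ z) * deriv φ₀ z) (volume : Measure ℝ))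
    (ᾱ v H γ' : ℝ)
    (u : ℝ → ℝ) (huC : ContDiff ℝ 2 u) (hu : memH2line u)
    (hLu : ∀ z : ℝ, deriv (deriv u) z - deriv (deriv W) (φ₀ z) * u z =
      (ᾱ * v - H) * deriv φ₀ z - γ' * deriv ν (φ₀ z) * T₀ z) :
    (∫ z : ℝ, (deriv φ₀ z) ^ 2) * (ᾱ * v - H) =
      γ' * ∫ z : ℝ, T₀ z * deriv (fun w => ν (φ₀ w)) z := by
  -- basic differentiability
  have hWd : Differentiable ℝ W := hW.differentiable (by norm_num)
  have hW'd : Differentiable ℝ (deriv W) :=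
    ((contDiff_succ_iff_deriv (n := 1)).mp (by exact_mod_cast hW)).2.2.differentiable (by norm_num)
  have hνd : Differentiable ℝ ν := hν.differentiable (by norm_num)
  have hφd : Differentiable ℝ φ₀ := hφ.differentiable (by norm_num)
  have hφ'd : Differentiable ℝ (deriv φ₀) :=
    ((contDiff_succ_iff_deriv (n := 1)).mp (by exact_mod_cast hφ)).2.2.differentiable (by norm_num)
  have hud : Differentiable ℝ u := huC.differentiable (by norm_num)
  have hu'd : Differentiable ℝ (deriv u) :=
    ((contDiff_succ_iff_deriv (n := 1)).mp (by exact_mod_cast huC)).2.2.differentiable (by norm_num)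
  -- third derivative of φ₀
  have h3 : deriv (deriv φ₀) = fun z => deriv W (φ₀ z) := funext heq
  have hφ''d : Differentiable ℝ (deriv (deriv φ₀)) := by
    rw [h3]; exact hW'd.comp hφd
  -- the boundary function g
  set g : ℝ → ℝ := fun z => deriv u z * deriv φ₀ z - u z * deriv (deriv φ₀) z with hg
  set G : ℝ → ℝ := fun z =>
    deriv (deriv u) z * deriv φ₀ z - u z * (deriv (deriv W) (φ₀ z) * deriv φ₀ z) with hG
  have hgd : ∀ z, HasDerivAt g (G z) z := by
    intro z
    have h1 : HasDerivAt (fun y => deriv u y * deriv φ₀ y)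
        (deriv (deriv u) z * deriv φ₀ z + deriv u z * deriv (deriv φ₀) z) z :=
      ((hu'd z).hasDerivAt).mul ((hφ'd z).hasDerivAt)
    have hc : HasDerivAt (fun y => deriv W (φ₀ y)) (deriv (deriv W) (φ₀ z) * deriv φ₀ z) z := by
      have := ((hW'd (φ₀ z)).hasDerivAt).comp z ((hφd z).hasDerivAt)
      exact this
    have hc' : HasDerivAt (deriv (deriv φ₀)) (deriv (deriv W) (φ₀ z) * deriv φ₀ z) z := by
      rw [h3]; exact hc
    have h2 : HasDerivAt (fun y => u y * deriv (deriv φ₀) y)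
        (deriv u z * deriv (deriv φ₀) z + u z * (deriv (deriv W) (φ₀ z) * deriv φ₀ z)) z :=
      ((hud z).hasDerivAt).mul hc'
    have := h1.sub h2
    refine this.congr_deriv ?_
    simp only [hG]; ring
  -- pointwise identity for G
  have hGpt : ∀ z, G z = (ᾱ * v - H) * (deriv φ₀ z) ^ 2
      - γ' * (T₀ z * deriv ν (φ₀ z) * deriv φ₀ z) := by
    intro z
    have := hLu z
    have h4 : G z = (deriv (deriv u) z - deriv (deriv W) (φ₀ z) * u z) * deriv φ₀ z := by
      simp only [hG]; ring
    rw [h4, this]; ring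
  -- integrability
  have hsq : Integrable (fun z => (deriv φ₀ z) ^ 2) (volume : Measure ℝ) := by
    have := mulL2 hφ'.1 hφ'.1; simpa [pow_two] using this
  have hGint : Integrable G (volume : Measure ℝ) := by
    have : Integrable (fun z => (ᾱ * v - H) * (deriv φ₀ z) ^ 2
        - γ' * (T₀ z * deriv ν (φ₀ z) * deriv φ₀ z)) (volume : Measure ℝ) := by
      refine Integrable.sub (hsq.const_mul _) ?_
      exact hT₀int.const_mul _
    exact this.congr (Eventually.of_forall fun z => (hGpt z).symm)
  -- limits of g at ±∞
  have hU := decay hud hu.1 hu.2.1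
  have hU' := decay hu'd hu.2.1 hu.2.2
  have hP := decay hφ'd hφ'.1 hφ'.2.1
  have hP' := decay hφ''d hφ'.2.1 hφ'.2.2
  have hgt : Tendsto g atTop (nhds 0) := by
    have := (hU'.1.mul hP.1).sub (hU.1.mul hP'.1)
    simpa using this
  have hgb : Tendsto g atBot (nhds 0) := by
    have := (hU'.2.mul hP.2).sub (hU.2.mul hP'.2)
    simpa using this
  have hzero : ∫ z, G z = 0 := int_deriv_zero hgd hGint hgt hgb
  -- compute
  have hsplit : ∫ z, G z = (ᾱ * v - H) * (∫ z, (deriv φ₀ z) ^ 2)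
      - γ' * ∫ z, T₀ z * deriv ν (φ₀ z) * deriv φ₀ z := by
    rw [show (fun z => G z) = fun z => (ᾱ * v - H) * (deriv φ₀ z) ^ 2
        - γ' * (T₀ z * deriv ν (φ₀ z) * deriv φ₀ z) from funext hGpt]
    rw [integral_sub (hsq.const_mul _) (hT₀int.const_mul _),
      integral_const_mul, integral_const_mul]
  have hkey : (ᾱ * v - H) * (∫ z, (deriv φ₀ z) ^ 2)
      = γ' * ∫ z, T₀ z * deriv ν (φ₀ z) * deriv φ₀ z := by
    rw [hsplit] at hzero; linarith
  have hlast : (∫ z : ℝ, T₀ z * deriv (fun w => ν (φ₀ w)) z)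
      = ∫ z, T₀ z * deriv ν (φ₀ z) * deriv φ₀ z := by
    refine integral_congr_ae (Eventually.of_forall fun z => ?_)
    have : deriv (fun w => ν (φ₀ w)) z = deriv ν (φ₀ z) * deriv φ₀ z := by
      have := ((hνd (φ₀ z)).hasDerivAt).comp z ((hφd z).hasDerivAt)
      exact this.deriv
    show T₀ z * deriv (fun w => ν (φ₀ w)) z = T₀ z * deriv ν (φ₀ z) * deriv φ₀ z
    rw [this]; ring
  rw [mul_comm, hlast]
  exact hkey
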